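/- Let A ∈ ℝ^{m×n}, let q ≥ 0 be an integer, and set B = (AAᵀ)^q A ∈ ℝ^{m×n}. Let Q ∈ ℝ^{m×μ} be orthonormal (QᵀQ = I_μ), and let R ∈ ℝ^{μ×ℓ}, Ω ∈ ℝ^{n×ℓ}, F ∈ ℝ^{ℓ×n} be arbitrary real matrices. Then ‖A − QQᵀA‖_F² ≤ 2‖BΩF − A‖_F² + 2‖F‖₂² · ‖QR − BΩ‖_F². -/

import Mathlib

open Matrix
open scoped BigOperators

noncomputable section

/-- Frobenius norm of a real matrix. -/
def frobNorm {m n : ℕ} (A : Matrix (Fin m) (Fin n) ℝ) : ℝ :=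
  Real.sqrt (∑ i, ∑ j, A i j ^ 2)

/-- Nonincreasing rearrangement of a finite tuple of reals. -/
def sortedDesc {n : ℕ} (f : Fin n → ℝ) : Fin n → ℝ :=
  fun k => - ((fun i => - f i) ∘ Tuple.sort (fun i => - f i)) k

/-- `sval A k` is the `(k+1)`-st largest singular value of `A` (i.e. 0-based index `k`),
the square root of the `(k+1)`-st largest eigenvalue of `AᵀA`; it is `0` for `k ≥ n`
(in particular for `k ≥ min m n`). -/
def sval {m n : ℕ} (A : Matrix (Fin m) (Fin n) ℝ) (k : ℕ) : ℝ :=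
  if h : k < n then
    Real.sqrt (sortedDesc (show (Aᵀ * A).IsHermitian by
      simpa [Matrix.conjTranspose_eq_transpose_of_trivial] using
        Matrix.isHermitian_conjTranspose_mul_self A).eigenvalues ⟨k, h⟩)
  else 0

/-- Spectral norm (ℓ²→ℓ² operator norm) of a real matrix: its largest singular value. -/
def specNorm {m n : ℕ} (A : Matrix (Fin m) (Fin n) ℝ) : ℝ := sval A 0

/-- `tailDelta A μ = Δ_{μ+1}(A) = sqrt (Σ_{k=μ+1}^{min(m,n)} σ_k(A)²)` (with 1-based σ's,
so 0-based indices `μ, …, min m n - 1`). -/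
def tailDelta {m n : ℕ} (A : Matrix (Fin m) (Fin n) ℝ) (μ : ℕ) : ℝ :=
  Real.sqrt (∑ k ∈ Finset.Ico μ (min m n), sval A k ^ 2)

end

/- ### Auxiliary lemmas -/

/-- Squared Frobenius norm as a sum. -/
noncomputable def frobSq {m n : ℕ} (A : Matrix (Fin m) (Fin n) ℝ) : ℝ :=
  ∑ i, ∑ j, A i j ^ 2

lemma frobSq_nonneg {m n : ℕ} (A : Matrix (Fin m) (Fin n) ℝ) : 0 ≤ frobSq A :=
  Finset.sum_nonneg fun _ _ => Finset.sum_nonneg fun _ _ => sq_nonneg _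

lemma frobNorm_sq {m n : ℕ} (A : Matrix (Fin m) (Fin n) ℝ) :
    frobNorm A ^ 2 = frobSq A :=
  Real.sq_sqrt (frobSq_nonneg A)

lemma frobSq_neg_sub {m n : ℕ} (A B : Matrix (Fin m) (Fin n) ℝ) :
    frobSq (A - B) = frobSq (B - A) := by
  unfold frobSq
  apply Finset.sum_congr rfl; intro i _
  apply Finset.sum_congr rfl; intro j _
  simp only [Matrix.sub_apply]
  ring

lemma frobSq_add_le {m n : ℕ} (A B : Matrix (Fin m) (Fin n) ℝ) :
    frobSq (A + B) ≤ 2 * frobSq A + 2 * frobSq B := by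
  unfold frobSq
  rw [Finset.mul_sum, Finset.mul_sum, ← Finset.sum_add_distrib]
  apply Finset.sum_le_sum; intro i _
  rw [Finset.mul_sum, Finset.mul_sum, ← Finset.sum_add_distrib]
  apply Finset.sum_le_sum; intro j _
  simp only [Matrix.add_apply]
  nlinarith [sq_nonneg (A i j - B i j)]

lemma sumsq_eq_dot {p : ℕ} (v : Fin p → ℝ) : ∑ i, v i ^ 2 = v ⬝ᵥ v := by
  simp [dotProduct, sq]

lemma mulVec_sumsq {p q : ℕ} (C : Matrix (Fin p) (Fin q) ℝ) (v : Fin q → ℝ) :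
    ∑ i, (C.mulVec v i) ^ 2 = v ⬝ᵥ ((Cᵀ * C).mulVec v) := by
  rw [sumsq_eq_dot]
  conv_rhs => rw [← mulVec_mulVec, dotProduct_mulVec, vecMul_transpose]

lemma proj_contract {m μ : ℕ} (Q : Matrix (Fin m) (Fin μ) ℝ) (hQ : Qᵀ * Q = 1)
    (v : Fin m → ℝ) :
    ∑ i, ((1 - Q * Qᵀ).mulVec v i) ^ 2 ≤ ∑ i, v i ^ 2 := by
  have hK : (1 - Q * Qᵀ)ᵀ * (1 - Q * Qᵀ) = 1 - Q * Qᵀ := by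
    simp [Matrix.mul_sub, Matrix.sub_mul, Matrix.transpose_sub, Matrix.mul_assoc]
    rw [← Matrix.mul_assoc Qᵀ Q Qᵀ, hQ]
    simp
  have h1 : ∑ i, ((1 - Q * Qᵀ).mulVec v i) ^ 2 = v ⬝ᵥ ((1 - Q * Qᵀ).mulVec v) := by
    rw [mulVec_sumsq, hK]
  have h2 : ∑ i, v i ^ 2 - ∑ i, ((1 - Q * Qᵀ).mulVec v i) ^ 2
      = ∑ j, (Qᵀ.mulVec v j) ^ 2 := by
    rw [h1, mulVec_sumsq, transpose_transpose, sumsq_eq_dot, sub_mulVec, dotProduct_sub,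
      one_mulVec]
    ring
  nlinarith [Finset.sum_nonneg (fun j (_ : j ∈ Finset.univ) => sq_nonneg (Qᵀ.mulVec v j))]

lemma sortedDesc_zero_mem {n : ℕ} (f : Fin n → ℝ) (hn : 0 < n) :
    ∃ i, sortedDesc f ⟨0, hn⟩ = f i :=
  ⟨Tuple.sort (fun i => - f i) ⟨0, hn⟩, by simp [sortedDesc]⟩

lemma le_sortedDesc_zero {n : ℕ} (f : Fin n → ℝ) (hn : 0 < n) (i : Fin n) :
    f i ≤ sortedDesc f ⟨0, hn⟩ := by
  have hm := Tuple.monotone_sort (fun i => - f i)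
  have h0 : (⟨0, hn⟩ : Fin n) ≤ (Tuple.sort (fun i => - f i)).symm i := by
    simp [Fin.le_def]
  have h := hm h0
  simp only [Function.comp_apply, Equiv.apply_symm_apply] at h
  simp only [sortedDesc, Function.comp_apply]
  linarith

lemma quad_form_le {n : ℕ} (M : Matrix (Fin n) (Fin n) ℝ) (hM : M.IsHermitian) (c : ℝ)
    (hc : ∀ i, hM.eigenvalues i ≤ c) (w : Fin n → ℝ) :
    w ⬝ᵥ M.mulVec w ≤ c * ∑ j, w j ^ 2 := by
  have hst := hM.spectral_theorem
  set U : Matrix (Fin n) (Fin n) ℝ := (hM.eigenvectorUnitary : Matrix (Fin n) (Fin n) ℝ) with hU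
  have hstar : star U = Uᵀ := by
    rw [Matrix.star_eq_conjTranspose, conjTranspose_eq_transpose_of_trivial]
  have hdiag : Matrix.diagonal (RCLike.ofReal ∘ hM.eigenvalues) = Matrix.diagonal hM.eigenvalues := by
    congr 1
  have hM' : M = U * Matrix.diagonal hM.eigenvalues * Uᵀ := by
    conv_lhs => rw [hst, Unitary.conjStarAlgAut_apply]
    rw [← hU, hstar, hdiag]
  have hUU : U * Uᵀ = 1 := by
    rw [← hstar]
    exact Matrix.mem_unitaryGroup_iff.mp hM.eigenvectorUnitary.2
  set u : Fin n → ℝ := Uᵀ.mulVec w with hu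
  have key : w ⬝ᵥ M.mulVec w = ∑ i, hM.eigenvalues i * u i ^ 2 := by
    conv_lhs => rw [hM']
    rw [← mulVec_mulVec, ← mulVec_mulVec, dotProduct_mulVec, ← mulVec_transpose, ← hu]
    simp [dotProduct, mulVec_diagonal]
    apply Finset.sum_congr rfl
    intro i _
    ring
  have hsum : ∑ i, u i ^ 2 = ∑ j, w j ^ 2 := by
    rw [hu, mulVec_sumsq, transpose_transpose, hUU, one_mulVec, sumsq_eq_dot]
  calc w ⬝ᵥ M.mulVec w = ∑ i, hM.eigenvalues i * u i ^ 2 := key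
    _ ≤ ∑ i, c * u i ^ 2 := by
        apply Finset.sum_le_sum
        intro i _
        exact mul_le_mul_of_nonneg_right (hc i) (sq_nonneg _)
    _ = c * ∑ i, u i ^ 2 := by rw [Finset.mul_sum]
    _ = c * ∑ j, w j ^ 2 := by rw [hsum]

/-- The key spectral bound: `‖Fᵀ v‖² ≤ ‖F‖₂² ‖v‖²`. -/
lemma spec_mulVec_bound {l n : ℕ} (F : Matrix (Fin l) (Fin n) ℝ) (v : Fin l → ℝ) :
    ∑ j, (Fᵀ.mulVec v j) ^ 2 ≤ specNorm F ^ 2 * ∑ i, v i ^ 2 := by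
  rcases Nat.eq_zero_or_pos n with hn | hn
  · subst hn
    simp only [Finset.univ_eq_empty, Finset.sum_empty]
    exact mul_nonneg (sq_nonneg _)
      (Finset.sum_nonneg fun _ _ => sq_nonneg _)
  · set hF : (Fᵀ * F).IsHermitian := (show (Fᵀ * F).IsHermitian by
      simpa [Matrix.conjTranspose_eq_transpose_of_trivial] using
        Matrix.isHermitian_conjTranspose_mul_self F) with hhF
    set c : ℝ := sortedDesc hF.eigenvalues ⟨0, hn⟩ with hc
    have hpsd : (Fᵀ * F).PosSemidef := by
      have := Matrix.posSemidef_conjTranspose_mul_self F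
      rwa [conjTranspose_eq_transpose_of_trivial] at this
    have hcnn : 0 ≤ c := by
      obtain ⟨i0, hi0⟩ := sortedDesc_zero_mem hF.eigenvalues hn
      rw [hc, hi0]
      exact hpsd.eigenvalues_nonneg i0
    have hspec : specNorm F ^ 2 = c := by
      rw [specNorm, sval, dif_pos hn, Real.sq_sqrt hcnn]
    have stepA : ∀ w : Fin n → ℝ, ∑ i, (F.mulVec w i) ^ 2 ≤ c * ∑ j, w j ^ 2 := by
      intro w
      rw [mulVec_sumsq]
      exact quad_form_le (Fᵀ * F) hF c (fun i => le_sortedDesc_zero hF.eigenvalues hn i) w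
    set w : Fin n → ℝ := Fᵀ.mulVec v with hw
    set s : ℝ := ∑ j, w j ^ 2 with hs
    have hsnn : 0 ≤ s := Finset.sum_nonneg fun _ _ => sq_nonneg _
    have hvnn : 0 ≤ ∑ i, v i ^ 2 := Finset.sum_nonneg fun _ _ => sq_nonneg _
    have hdot : s = v ⬝ᵥ F.mulVec w := by
      rw [hs, sumsq_eq_dot, hw]
      conv_lhs => rw [mulVec_transpose]
      rw [← dotProduct_mulVec, mulVec_transpose]
    have hcs : s ^ 2 ≤ (∑ i, v i ^ 2) * ∑ i, (F.mulVec w i) ^ 2 := by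
      rw [hdot]
      exact Finset.sum_mul_sq_le_sq_mul_sq Finset.univ v (F.mulVec w)
    have hkey : s ^ 2 ≤ (∑ i, v i ^ 2) * (c * s) :=
      hcs.trans (mul_le_mul_of_nonneg_left (stepA w) hvnn)
    rw [hspec]
    rcases eq_or_lt_of_le hsnn with h0 | h0
    · rw [← h0]
      exact mul_nonneg hcnn hvnn
    · nlinarith
 
lemma frobSq_mul_right_le {m l n : ℕ} (M : Matrix (Fin m) (Fin l) ℝ)
    (F : Matrix (Fin l) (Fin n) ℝ) :
    frobSq (M * F) ≤ specNorm F ^ 2 * frobSq M := by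
  unfold frobSq
  rw [Finset.mul_sum]
  apply Finset.sum_le_sum; intro i _
  have hrow : ∀ j, (M * F) i j = Fᵀ.mulVec (fun k => M i k) j := by
    intro j
    simp [Matrix.mul_apply, Matrix.mulVec, dotProduct, mul_comm]
  calc ∑ j, (M * F) i j ^ 2 = ∑ j, (Fᵀ.mulVec (fun k => M i k) j) ^ 2 := by
        apply Finset.sum_congr rfl; intro j _; rw [hrow j]
    _ ≤ specNorm F ^ 2 * ∑ k, (M i k) ^ 2 := spec_mulVec_bound F _

lemma frobSq_proj_mul_le {m μ n : ℕ} (Q : Matrix (Fin m) (Fin μ) ℝ) (hQ : Qᵀ * Q = 1)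
    (M : Matrix (Fin m) (Fin n) ℝ) :
    frobSq ((1 - Q * Qᵀ) * M) ≤ frobSq M := by
  unfold frobSq
  rw [Finset.sum_comm]
  conv_rhs => rw [Finset.sum_comm]
  apply Finset.sum_le_sum; intro j _
  have hcol : ∀ i, (((1 - Q * Qᵀ : Matrix (Fin m) (Fin m) ℝ)) * M) i j
      = (1 - Q * Qᵀ).mulVec (fun k => M k j) i := by
    intro i
    simp [Matrix.mul_apply, Matrix.mulVec, dotProduct]
  calc ∑ i, (((1 - Q * Qᵀ : Matrix (Fin m) (Fin m) ℝ)) * M) i j ^ 2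
      = ∑ i, ((1 - Q * Qᵀ).mulVec (fun k => M k j) i) ^ 2 := by
        apply Finset.sum_congr rfl; intro i _; rw [hcol i]
    _ ≤ ∑ i, (M i j) ^ 2 := proj_contract Q hQ _

/-- For `B = (AAᵀ)^q A` and orthonormal `Q`,
`‖A − QQᵀA‖_F² ≤ 2‖BΩF − A‖_F² + 2‖F‖₂²‖QR − BΩ‖_F²`. -/
theorem frob_sq_proj_le {m n μ ℓ : ℕ} (q : ℕ) (hμm : μ ≤ m)
    (A : Matrix (Fin m) (Fin n) ℝ)
    (B : Matrix (Fin m) (Fin n) ℝ) (hB : B = (A * Aᵀ) ^ q * A)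
    (Q : Matrix (Fin m) (Fin μ) ℝ) (hQ : Qᵀ * Q = 1)
    (R : Matrix (Fin μ) (Fin ℓ) ℝ) (Ω : Matrix (Fin n) (Fin ℓ) ℝ)
    (F : Matrix (Fin ℓ) (Fin n) ℝ) :
    frobNorm (A - Q * Qᵀ * A) ^ 2 ≤
      2 * frobNorm (B * Ω * F - A) ^ 2 + 2 * specNorm F ^ 2 * frobNorm (Q * R - B * Ω) ^ 2 := by
  set K : Matrix (Fin m) (Fin m) ℝ := 1 - Q * Qᵀ with hK
  have hKQ : K * Q = 0 := by
    rw [hK, Matrix.sub_mul, Matrix.one_mul, Matrix.mul_assoc, hQ, Matrix.mul_one, sub_self]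
  have hKA : A - Q * Qᵀ * A = K * A := by
    rw [hK, Matrix.sub_mul, Matrix.one_mul]
  have h0 : K * (Q * R) = 0 := by
    rw [← Matrix.mul_assoc, hKQ, Matrix.zero_mul]
  have hdecomp : K * A = K * (A - B * Ω * F) + (K * (B * Ω - Q * R)) * F := by
    rw [Matrix.mul_sub K (B * Ω) (Q * R), Matrix.sub_mul (K * (B * Ω)) (K * (Q * R)) F, h0,
      Matrix.zero_mul, sub_zero, Matrix.mul_sub K A (B * Ω * F), Matrix.mul_assoc K (B * Ω) F]
    abel
  rw [frobNorm_sq, frobNorm_sq, frobNorm_sq, hKA, hdecomp]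
  have h1 : frobSq (K * (A - B * Ω * F)) ≤ frobSq (B * Ω * F - A) := by
    rw [frobSq_neg_sub (B * Ω * F) A]
    exact frobSq_proj_mul_le Q hQ _
  have h2 : frobSq ((K * (B * Ω - Q * R)) * F) ≤ specNorm F ^ 2 * frobSq (Q * R - B * Ω) := by
    calc frobSq ((K * (B * Ω - Q * R)) * F)
        ≤ specNorm F ^ 2 * frobSq (K * (B * Ω - Q * R)) := frobSq_mul_right_le _ F
      _ ≤ specNorm F ^ 2 * frobSq (Q * R - B * Ω) := by
          apply mul_le_mul_of_nonneg_left _ (sq_nonneg _)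
          rw [frobSq_neg_sub (Q * R) (B * Ω)]
          exact frobSq_proj_mul_le Q hQ _
  calc frobSq (K * (A - B * Ω * F) + (K * (B * Ω - Q * R)) * F)
      ≤ 2 * frobSq (K * (A - B * Ω * F)) + 2 * frobSq ((K * (B * Ω - Q * R)) * F) :=
        frobSq_add_le _ _
    _ ≤ 2 * frobSq (B * Ω * F - A) + 2 * (specNorm F ^ 2 * frobSq (Q * R - B * Ω)) := by
        apply add_le_add
        · linarith
        · linarith
    _ = 2 * frobSq (B * Ω * F - A) + 2 * specNorm F ^ 2 * frobSq (Q * R - B * Ω) := by ring
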